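/- The quotient V[[s]] / N is a finite-dimensional k-vector space and 2 · dim_k ( V[[s]] / N ) = e · ( dim_k V − dim_k ker(g − id_V) ). (This is the key computation in the proof of the paper's theorem that dim X_γ^{λ,reg} = ⟨ρ,λ⟩ + (d(γ) − c(γ))/2: with V = 𝔱, g = w_γ the order-e Weyl element attached to γ, the quotient 𝔱 ⊗ Õ / (M ⊗_𝒪 Õ) has k-dimension (e/2)·c(γ), where c(γ) = dim 𝔱 − dim 𝔱^{w_γ}.) -/

import Mathlib

open Finset

/-!
Statement 8: the key dimension computation in the proof of the paper's
Theorem `dim-reg-locus-thm`: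
`2 · dim_k (V[[s]] / N) = e · (dim_k V − dim_k ker(g − id))`,
where `V[[s]] = k[[s]] ⊗_k V`, `M` is the fixed-point set of `g ⊗ σ`
(with `σ(s) = ζ s`), and `N` is the `k[[s]]`-submodule generated by `M`.
-/

/-- The rescaling `f(s) ↦ f(ζ s)`, i.e. the `k`-algebra automorphism `σ` of
`k[[s]]` with `σ(s) = ζ s`, as a `k`-linear map. -/
noncomputable def rescaleL (k : Type*) [CommRing k] (ζ : k) :
    PowerSeries k →ₗ[k] PowerSeries k where
  toFun := PowerSeries.rescale ζ
  map_add' f g := map_add _ f g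
  map_smul' c f := by
    ext n
    simp [PowerSeries.coeff_rescale, PowerSeries.coeff_smul, smul_eq_mul,
      mul_left_comm]


open Finset

section proj
variable {k : Type*} [Field k] {e : ℕ} {ζ : k}
variable {V : Type*} [AddCommGroup V] [Module k V]

lemma geom_aux {μ : k} (hμe : μ ^ e = 1) (hμ : μ ≠ 1) :
    ∑ i ∈ range e, μ ^ i = 0 := by
  rw [geom_sum_eq hμ, hμe, sub_self, zero_div]

lemma shift_aux (he : 1 ≤ e) (g : Module.End k V) (hge : g ^ e = 1)
    {μ : k} (hμe : μ ^ e = 1) :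
    ∑ n ∈ range e, μ⁻¹ ^ n • g ^ (n + 1) = μ • ∑ n ∈ range e, μ⁻¹ ^ n • g ^ n := by
  have hμ0 : μ ≠ 0 := fun h => by simp [h, zero_pow (by omega : e ≠ 0)] at hμe
  have hinv : μ⁻¹ ^ e = 1 := by rw [inv_pow, hμe, inv_one]
  have hkey : μ⁻¹ ^ (e - 1) = μ := by
    have h2 : μ⁻¹ ^ (e - 1) * μ⁻¹ = 1 := by
      rw [← pow_succ, Nat.sub_add_cancel he, hinv]
    calc μ⁻¹ ^ (e - 1) = μ⁻¹ ^ (e - 1) * (μ⁻¹ * μ) := by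
          rw [inv_mul_cancel₀ hμ0, mul_one]
      _ = (μ⁻¹ ^ (e - 1) * μ⁻¹) * μ := by ring
      _ = μ := by rw [h2, one_mul]
  obtain ⟨e', rfl⟩ : ∃ e', e = e' + 1 := ⟨e - 1, by omega⟩
  rw [Finset.smul_sum, Finset.sum_range_succ, Finset.sum_range_succ']
  simp only [Nat.add_sub_cancel] at hkey
  have h1 : ∀ n, μ • μ⁻¹ ^ (n + 1) • g ^ (n + 1) = μ⁻¹ ^ n • g ^ (n + 1) := by
    intro n
    rw [smul_smul, pow_succ', ← mul_assoc, mul_inv_cancel₀ hμ0, one_mul]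
  simp only [h1, pow_zero, smul_smul, mul_one, hge, hkey]

/-- The projection onto the `ζ^j`-eigenspace. -/
noncomputable def projE (e : ℕ) (ζ : k) (g : Module.End k V) (j : ℕ) : Module.End k V :=
  (e : k)⁻¹ • ∑ n ∈ range e, ((ζ ^ j)⁻¹) ^ n • g ^ n

lemma projE_mem (he : 1 ≤ e) (hζ : IsPrimitiveRoot ζ e) (g : Module.End k V)
    (hge : g ^ e = 1) (j : ℕ) (x : V) :
    projE e ζ g j x ∈ Module.End.eigenspace g (ζ ^ j) := by
  have hμe : (ζ ^ j) ^ e = 1 := by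
    rw [← pow_mul, mul_comm, pow_mul, hζ.pow_eq_one, one_pow]
  have hop : g * projE e ζ g j = ζ ^ j • projE e ζ g j := by
    unfold projE
    rw [mul_smul_comm, smul_comm]
    congr 1
    rw [Finset.mul_sum]
    have : ∀ n, g * ((ζ ^ j)⁻¹) ^ n • g ^ n = ((ζ ^ j)⁻¹) ^ n • g ^ (n + 1) := by
      intro n; rw [mul_smul_comm, ← pow_succ']
    simp only [this]
    exact shift_aux he g hge hμe
  rw [Module.End.mem_eigenspace_iff]
  calc g (projE e ζ g j x) = (g * projE e ζ g j) x := rfl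
    _ = ζ ^ j • projE e ζ g j x := by rw [hop]; rfl

lemma sum_projE (he : 1 ≤ e) (hζ : IsPrimitiveRoot ζ e) (g : Module.End k V)
    (hge : g ^ e = 1) :
    ∑ j ∈ range e, projE e ζ g j = 1 := by
  haveI : NeZero e := ⟨by omega⟩
  have hek : (e : k) ≠ 0 := (hζ.neZero').1
  unfold projE
  rw [← Finset.smul_sum]
  have hswap : ∑ j ∈ range e, ∑ n ∈ range e, ((ζ ^ j)⁻¹) ^ n • g ^ n
      = ∑ n ∈ range e, (∑ j ∈ range e, ((ζ ^ n)⁻¹) ^ j) • g ^ n := by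
    rw [Finset.sum_comm]
    refine Finset.sum_congr rfl fun n _ => ?_
    rw [Finset.sum_smul]
    refine Finset.sum_congr rfl fun j _ => ?_
    have : ((ζ ^ j)⁻¹) ^ n = ((ζ ^ n)⁻¹) ^ j := by
      rw [← inv_pow, ← inv_pow, ← pow_mul, ← pow_mul, mul_comm]
    rw [this]
  rw [hswap]
  have hsum : ∀ n ∈ range e, n ≠ 0 → (∑ j ∈ range e, ((ζ ^ n)⁻¹) ^ j) • (g ^ n) = 0 := by
    intro n hn hn0
    rw [mem_range] at hn
    have hne : (ζ ^ n)⁻¹ ≠ 1 := by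
      rw [ne_eq, inv_eq_one]
      exact hζ.pow_ne_one_of_pos_of_lt (by omega) hn
    have h1 : ((ζ ^ n)⁻¹) ^ e = 1 := by
      rw [inv_pow, ← pow_mul, mul_comm, pow_mul, hζ.pow_eq_one, one_pow, inv_one]
    rw [geom_aux h1 hne, zero_smul]
  rw [Finset.sum_eq_single_of_mem 0 (mem_range.2 (by omega)) hsum]
  simp only [pow_zero, inv_one, one_pow, Finset.sum_const, card_range, nsmul_eq_mul, mul_one]
  rw [smul_smul, inv_mul_cancel₀ hek, one_smul]

lemma iSup_eigenspace_top (he : 1 ≤ e) (hζ : IsPrimitiveRoot ζ e) (g : Module.End k V)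
    (hge : g ^ e = 1) :
    ⨆ j : Fin e, Module.End.eigenspace g (ζ ^ (j : ℕ)) = ⊤ := by
  rw [eq_top_iff]
  intro x _
  have hx : x = ∑ j ∈ range e, projE e ζ g j x := by
    have := sum_projE he hζ g hge
    calc x = (1 : Module.End k V) x := rfl
      _ = (∑ j ∈ range e, projE e ζ g j) x := by rw [this]
      _ = ∑ j ∈ range e, projE e ζ g j x := by
          rw [LinearMap.sum_apply]
  rw [hx]
  apply Submodule.sum_mem
  intro j hj
  rw [mem_range] at hj
  exact Submodule.mem_iSup_of_mem ⟨j, hj⟩ (projE_mem he hζ g hge j x)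

end proj

section dual
variable {k : Type*} [Field k] {e : ℕ} {ζ : k}
variable {V : Type*} [AddCommGroup V] [Module k V] [FiniteDimensional k V]

lemma finrank_eigen_le (he : 1 ≤ e) (hζ : IsPrimitiveRoot ζ e)
    (B : V →ₗ[k] V →ₗ[k] k) (hsymm : ∀ x y, B x y = B y x)
    (hnd : ∀ x, (∀ y, B x y = 0) → x = 0)
    (g : Module.End k V) (hge : g ^ e = 1)
    (hgB : ∀ x y, B (g x) (g y) = B x y)
    (a b : ℕ) (hab : e ∣ a + b) :
    Module.finrank k (Module.End.eigenspace g (ζ ^ a))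
      ≤ Module.finrank k (Module.End.eigenspace g (ζ ^ b)) := by
  set Ea := Module.End.eigenspace g (ζ ^ a) with hEa
  set Eb := Module.End.eigenspace g (ζ ^ b) with hEb
  have hζ0 : ζ ≠ 0 := hζ.ne_zero (by omega)
  set φ : Ea →ₗ[k] (Eb →ₗ[k] k) := (B.comp Ea.subtype).compl₂ Eb.subtype with hφ
  have hinj : Function.Injective φ := by
    rw [← LinearMap.ker_eq_bot, eq_bot_iff]
    intro y hy
    rw [LinearMap.mem_ker] at hy
    have hyEb : ∀ x ∈ Eb, B (y : V) x = 0 := by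
      intro x hx
      have := congrFun (congrArg DFunLike.coe hy) ⟨x, hx⟩
      simpa [hφ, LinearMap.compl₂_apply] using this
    have hyall : ∀ x : V, B (y : V) x = 0 := by
      intro x
      have hx : x ∈ ⨆ j : Fin e, Module.End.eigenspace g (ζ ^ (j : ℕ)) := by
        rw [iSup_eigenspace_top he hζ g hge]; trivial
      refine Submodule.iSup_induction (motive := fun z => B (y : V) z = 0) _ hx
        (fun c z hzc => ?_) (by simp) (fun z w hz hw => by
          show B (y : V) (z + w) = 0
          rw [map_add, show B (y : V) z = 0 from hz, show B (y : V) w = 0 from hw,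
            add_zero])
      · have hgy : g (y : V) = ζ ^ a • (y : V) := Module.End.mem_eigenspace_iff.1 y.2
        have hgz : g z = ζ ^ (c : ℕ) • z := Module.End.mem_eigenspace_iff.1 hzc
        have heq : B (y : V) z = ζ ^ (a + (c : ℕ)) * B (y : V) z := by
          have h3 : B (ζ ^ a • (y : V)) (ζ ^ (c : ℕ) • z)
              = ζ ^ (a + (c : ℕ)) * B (y : V) z := by
            simp only [map_smul, LinearMap.smul_apply, smul_eq_mul, pow_add]
            ring
          conv_lhs => rw [← hgB (y : V) z, hgy, hgz, h3]
        by_cases hdvd : e ∣ a + (c : ℕ)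
        · have h1 : ζ ^ a * ζ ^ (c : ℕ) = ζ ^ a * ζ ^ b := by
            rw [← pow_add, ← pow_add, (hζ.pow_eq_one_iff_dvd _).2 hdvd,
              (hζ.pow_eq_one_iff_dvd _).2 hab]
          have h2 : ζ ^ (c : ℕ) = ζ ^ b := mul_left_cancel₀ (pow_ne_zero _ hζ0) h1
          refine hyEb z ?_
          show z ∈ Module.End.eigenspace g (ζ ^ b)
          rwa [← h2]
        · have hne : ζ ^ (a + (c : ℕ)) ≠ 1 := fun h => hdvd ((hζ.pow_eq_one_iff_dvd _).1 h)
          have h4 : (1 - ζ ^ (a + (c : ℕ))) * B (y : V) z = 0 := by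
            linear_combination heq
          exact (mul_eq_zero.1 h4).resolve_left (sub_ne_zero.2 (Ne.symm hne))
    have : (y : V) = 0 := hnd _ hyall
    rw [Submodule.mem_bot]
    exact Subtype.ext this
  calc Module.finrank k Ea ≤ Module.finrank k (Eb →ₗ[k] k) :=
        LinearMap.finrank_le_finrank_of_injective hinj
    _ = Module.finrank k Eb := Subspace.dual_finrank_eq

end dual

section arith

lemma arith_aux {e : ℕ} (he : 1 ≤ e) (d : Fin e → ℕ)
    (hd : ∀ j : Fin e, d j = d ⟨(e - (j : ℕ)) % e, Nat.mod_lt _ (by omega)⟩) :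
    2 * ∑ j : Fin e, ((e - (j : ℕ)) % e) * d j
      = e * ((∑ j : Fin e, d j) - d ⟨0, he⟩) := by
  set z : Fin e := ⟨0, he⟩ with hz
  set rev : Fin e → Fin e := fun j => ⟨(e - (j : ℕ)) % e, Nat.mod_lt _ (by omega)⟩ with hrev
  have hinv : Function.Involutive rev := by
    intro j
    apply Fin.ext
    show (e - ((e - (j : ℕ)) % e)) % e = (j : ℕ)
    rcases Nat.eq_zero_or_pos (j : ℕ) with h | h
    · rw [h, Nat.sub_zero, Nat.mod_self, Nat.sub_zero, Nat.mod_self]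
    · have hj : (j : ℕ) < e := j.isLt
      have h1 : (e - (j : ℕ)) % e = e - (j : ℕ) := Nat.mod_eq_of_lt (by omega)
      rw [h1, Nat.sub_sub_self (le_of_lt hj), Nat.mod_eq_of_lt hj]
  set n : Fin e → ℕ := fun j => (e - (j : ℕ)) % e with hn
  have hkey : ∀ j : Fin e, n j + n (rev j) = if (j : ℕ) = 0 then 0 else e := by
    intro j
    rcases Nat.eq_zero_or_pos (j : ℕ) with h | h
    · have h2 : (e - (j : ℕ)) % e = 0 := by rw [h, Nat.sub_zero, Nat.mod_self]
      simp only [hn, hrev, if_pos h]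
      show (e - (j : ℕ)) % e + (e - ((e - (j : ℕ)) % e)) % e = 0
      rw [h2, Nat.sub_zero, Nat.mod_self]
    · have hj : (j : ℕ) < e := j.isLt
      have h1 : (e - (j : ℕ)) % e = e - (j : ℕ) := Nat.mod_eq_of_lt (by omega)
      simp only [hn, hrev, if_neg (by omega : ¬ (j : ℕ) = 0)]
      show (e - (j : ℕ)) % e + (e - ((e - (j : ℕ)) % e)) % e = e
      rw [h1, Nat.sub_sub_self (by omega), Nat.mod_eq_of_lt hj]
      omega
  have hcomp : ∑ j : Fin e, n j * d j = ∑ j : Fin e, n (rev j) * d (rev j) :=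
    (Equiv.sum_comp (hinv.toPerm rev) (fun j => n j * d j)).symm
  have hsum : ∑ j : Fin e, d j = d z + ∑ j ∈ Finset.univ.erase z, d j :=
    (Finset.add_sum_erase _ _ (Finset.mem_univ z)).symm
  rw [hsum, Nat.add_sub_cancel_left, two_mul]
  nth_rewrite 1 [hcomp]
  rw [← Finset.sum_add_distrib]
  have hterm : ∀ j : Fin e, n (rev j) * d (rev j) + n j * d j
      = (if (j : ℕ) = 0 then 0 else e) * d j := by
    intro j
    rw [show d (rev j) = d j from (hd j).symm, ← Nat.add_mul, Nat.add_comm (n (rev j)),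
      hkey j]
  rw [Finset.sum_congr rfl (fun j _ => hterm j)]
  rw [← Finset.add_sum_erase _ _ (Finset.mem_univ z)]
  have hz0 : (if ((z : Fin e) : ℕ) = 0 then 0 else e) * d z = 0 := by
    simp [hz]
  rw [hz0, Nat.zero_add, Finset.mul_sum]
  refine Finset.sum_congr rfl fun j hj => ?_
  have : (j : ℕ) ≠ 0 := by
    intro h
    exact (Finset.mem_erase.1 hj).1 (Fin.ext h)
  rw [if_neg this]

end arith

section main
open PowerSeries

set_option maxHeartbeats 2000000 in
set_option synthInstance.maxHeartbeats 400000 in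
theorem dim_quotient_fixed_points
    {k : Type*} [Field k] {e : ℕ} (he : 1 ≤ e) {ζ : k}
    (hζ : IsPrimitiveRoot ζ e)
    {V : Type*} [AddCommGroup V] [Module k V] [FiniteDimensional k V]
    (B : V →ₗ[k] V →ₗ[k] k)
    (hsymm : ∀ x y, B x y = B y x)
    (hnd : ∀ x, (∀ y, B x y = 0) → x = 0)
    (g : V →ₗ[k] V)
    (hge : g ^ e = LinearMap.id)
    (hgB : ∀ x y, B (g x) (g y) = B x y)
    -- `N` is the `k[[s]]`-submodule of `V[[s]] = k[[s]] ⊗_k V` generated by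
    -- the fixed points `M` of `g ⊗ σ`
    (N : Submodule (PowerSeries k) (TensorProduct k (PowerSeries k) V))
    (hN : N = Submodule.span (PowerSeries k)
        {w : TensorProduct k (PowerSeries k) V |
          TensorProduct.map (rescaleL k ζ) g w = w}) :
    FiniteDimensional k
        (TensorProduct k (PowerSeries k) V ⧸ N.restrictScalars k) ∧
      2 * Module.finrank k
          (TensorProduct k (PowerSeries k) V ⧸ N.restrictScalars k)
        = e * (Module.finrank k V
            - Module.finrank k (LinearMap.ker (g - LinearMap.id))) := by
  classical
  haveI : NeZero e := ⟨by omega⟩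
  -- `g` as an endomorphism of order dividing `e`
  have hge1 : (g : Module.End k V) ^ e = 1 := by rw [hge]; rfl
  -- eigenspace decomposition
  set E : Fin e → Submodule k V :=
    fun j => Module.End.eigenspace g (ζ ^ (j : ℕ)) with hE
  have hIndep : iSupIndep E := by
    refine (Module.End.eigenspaces_iSupIndep g).comp ?_
    intro j j' h
    exact Fin.ext (hζ.pow_inj j.isLt j'.isLt h)
  have hTop : ⨆ j, E j = ⊤ := iSup_eigenspace_top he hζ g hge1
  have hInt : DirectSum.IsInternal E :=
    DirectSum.isInternal_submodule_of_iSupIndep_of_iSup_eq_top hIndep hTop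
  obtain ⟨b, hgb⟩ : ∃ b : Module.Basis (Σ j : Fin e, Module.Free.ChooseBasisIndex k (E j)) k V,
      ∀ i, g (b i) = ζ ^ ((i.1 : Fin e) : ℕ) • b i := by
    refine ⟨hInt.collectedBasis (fun j => Module.Free.chooseBasis k (E j)), fun i => ?_⟩
    have h := hInt.collectedBasis_mem (fun j => Module.Free.chooseBasis k (E j)) i
    exact Module.End.mem_eigenspace_iff.1 h
  set jj : (Σ j : Fin e, Module.Free.ChooseBasisIndex k (E j)) → ℕ :=
    fun i => (i.1 : ℕ) with hjj
  have hjlt : ∀ i, jj i < e := fun i => i.1.isLt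
  set nn : (Σ j : Fin e, Module.Free.ChooseBasisIndex k (E j)) → ℕ := fun i => (e - jj i) % e with hnn
  have hnlt : ∀ i, nn i < e := fun i => Nat.mod_lt _ (by omega)
  have hndvd : ∀ i, e ∣ nn i + jj i := by
    intro i
    rcases Nat.eq_zero_or_pos (jj i) with h | h
    · simp [hnn, h, Nat.mod_self]
    · have : nn i = e - jj i := Nat.mod_eq_of_lt (by omega)
      rw [this, Nat.sub_add_cancel (le_of_lt (hjlt i))]
  have hζnj : ∀ i, ζ ^ (nn i) * ζ ^ (jj i) = 1 := by
    intro i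
    rw [← pow_add]
    exact (hζ.pow_eq_one_iff_dvd _).2 (hndvd i)
  -- base change basis
  set b' : Module.Basis (Σ j : Fin e, Module.Free.ChooseBasisIndex k (E j))
      (PowerSeries k) (TensorProduct k (PowerSeries k) V) :=
    b.baseChange (PowerSeries k) with hb'
  -- action of `g` in the chosen basis
  have hrepr_g : ∀ (v : V) i, b.repr (g v) i = ζ ^ (jj i) * b.repr v i := by
    intro v i
    have hmaps : ((Finsupp.lapply i).comp (b.repr.toLinearMap.comp g) : V →ₗ[k] k)
        = ζ ^ (jj i) • (Finsupp.lapply i).comp b.repr.toLinearMap := by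
      refine b.ext fun i' => ?_
      simp only [LinearMap.comp_apply, LinearEquiv.coe_coe, LinearMap.smul_apply,
        Finsupp.lapply_apply, hgb i', map_smul, Module.Basis.repr_self, Finsupp.smul_apply,
        Finsupp.single_apply, smul_eq_mul]
      by_cases h : i' = i
      · subst h; simp [hjj]
      · simp [h]
    have := LinearMap.congr_fun hmaps v
    simpa using this
  -- action of `g ⊗ σ` on coordinates
  have hreprT : ∀ (w : TensorProduct k (PowerSeries k) V) i,
      b'.repr (TensorProduct.map (rescaleL k ζ) g w) i
        = ζ ^ (jj i) • PowerSeries.rescale ζ (b'.repr w i) := by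
    intro w i
    induction w using TensorProduct.induction_on with
    | zero => simp
    | tmul f v =>
        rw [TensorProduct.map_tmul]
        show b'.repr ((rescaleL k ζ f) ⊗ₜ[k] g v) i = _
        rw [hb', Module.Basis.baseChange_repr_tmul, Module.Basis.baseChange_repr_tmul, hrepr_g]
        have hres : PowerSeries.rescale ζ ((b.repr v i) • f)
            = (b.repr v i) • PowerSeries.rescale ζ f := (rescaleL k ζ).map_smul _ f
        show (ζ ^ jj i * b.repr v i) • PowerSeries.rescale ζ f
          = ζ ^ jj i • PowerSeries.rescale ζ (b.repr v i • f)
        rw [hres, smul_smul]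
    | add w₁ w₂ ih₁ ih₂ =>
        simp only [map_add, Finsupp.coe_add, Pi.add_apply, ih₁, ih₂, smul_add]
  -- coordinates of fixed points vanish below `nn i`
  have hfix : ∀ (w : TensorProduct k (PowerSeries k) V),
      TensorProduct.map (rescaleL k ζ) g w = w →
      ∀ i (m : ℕ), m < nn i → PowerSeries.coeff m (b'.repr w i) = 0 := by
    intro w hw i m hm
    have h1 : ζ ^ (jj i) • PowerSeries.rescale ζ (b'.repr w i) = b'.repr w i := by
      rw [← hreprT w i, hw]
    have h2 : ζ ^ (jj i) * (ζ ^ m * PowerSeries.coeff m (b'.repr w i))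
        = PowerSeries.coeff m (b'.repr w i) := by
      have := congrArg (PowerSeries.coeff m) h1
      rwa [PowerSeries.coeff_smul, PowerSeries.coeff_rescale, smul_eq_mul] at this
    have hj0 : 0 < jj i := by
      rcases Nat.eq_zero_or_pos (jj i) with h | h
      · exfalso; rw [hnn] at hm; simp [h, Nat.mod_self] at hm
      · exact h
    have hjm : jj i + m < e := by
      have : nn i = e - jj i := Nat.mod_eq_of_lt (by have := hjlt i; omega)
      omega
    have hne : ζ ^ (jj i + m) ≠ 1 := hζ.pow_ne_one_of_pos_of_lt (by omega) hjm
    have h3 : (1 - ζ ^ (jj i + m)) * PowerSeries.coeff m (b'.repr w i) = 0 := by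
      rw [pow_add]
      linear_combination -h2
    exact (mul_eq_zero.1 h3).resolve_left (sub_ne_zero.2 (Ne.symm hne))
  -- the explicit description of `N`
  set N' : Submodule (PowerSeries k) (TensorProduct k (PowerSeries k) V) :=
    ⨅ i, Submodule.comap (b'.coord i)
      (Ideal.span {(PowerSeries.X : PowerSeries k) ^ nn i}) with hN'
  have memN' : ∀ w, w ∈ N' ↔ ∀ i,
      (PowerSeries.X : PowerSeries k) ^ nn i ∣ b'.repr w i := by
    intro w
    simp [hN', Submodule.mem_iInf, Submodule.mem_comap, Ideal.mem_span_singleton,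
      Module.Basis.coord_apply]
  have hgen : ∀ i, TensorProduct.map (rescaleL k ζ) g
      (((PowerSeries.X : PowerSeries k) ^ nn i) • b' i)
      = ((PowerSeries.X : PowerSeries k) ^ nn i) • b' i := by
    intro i
    have hb'i : b' i = (1 : PowerSeries k) ⊗ₜ[k] b i := by
      rw [hb', Module.Basis.baseChange_apply]
    rw [hb'i, TensorProduct.smul_tmul', smul_eq_mul, mul_one, TensorProduct.map_tmul]
    show (PowerSeries.rescale ζ (PowerSeries.X ^ nn i)) ⊗ₜ[k] g (b i) = _
    rw [hgb i, map_pow, PowerSeries.rescale_X]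
    have : ((PowerSeries.C ζ) * PowerSeries.X) ^ nn i
        = ζ ^ nn i • (PowerSeries.X : PowerSeries k) ^ nn i := by
      rw [mul_pow, ← map_pow, PowerSeries.smul_eq_C_mul]
    rw [this, ← TensorProduct.smul_tmul', TensorProduct.tmul_smul, smul_smul, hζnj i,
      one_smul]
  have hNN' : N = N' := by
    rw [hN]
    apply le_antisymm
    · rw [Submodule.span_le]
      intro w hw
      rw [SetLike.mem_coe, memN']
      intro i
      rw [PowerSeries.X_pow_dvd_iff]
      exact fun m hm => hfix w hw i m hm
    · intro w hw
      rw [memN'] at hw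
      have hrepr : w = ∑ i, b'.repr w i • b' i := (b'.sum_repr w).symm
      rw [hrepr]
      apply Submodule.sum_mem
      intro i _
      obtain ⟨q, hq⟩ := hw i
      have : b'.repr w i • b' i
          = q • (((PowerSeries.X : PowerSeries k) ^ nn i) • b' i) := by
        rw [smul_smul, mul_comm, ← hq]
      rw [this]
      exact Submodule.smul_mem _ q (Submodule.subset_span (hgen i))
  -- the truncation map
  set Φ : TensorProduct k (PowerSeries k) V →ₗ[k] (∀ i, Fin (nn i) → k) :=
    LinearMap.pi (fun i => LinearMap.pi (fun m =>
      (PowerSeries.coeff (m : ℕ)).comp ((b'.coord i).restrictScalars k))) with hΦ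
  have hΦapply : ∀ w i m, Φ w i m = PowerSeries.coeff (m : ℕ) (b'.repr w i) := by
    intro w i m
    simp [hΦ, Module.Basis.coord_apply]
  have hker : LinearMap.ker Φ = N'.restrictScalars k := by
    ext w
    rw [LinearMap.mem_ker, Submodule.restrictScalars_mem, memN']
    constructor
    · intro h i
      rw [PowerSeries.X_pow_dvd_iff]
      intro m hm
      have := congrFun (congrFun h i) ⟨m, hm⟩
      rw [hΦapply] at this
      simpa using this
    · intro h
      funext i m
      have := (PowerSeries.X_pow_dvd_iff.1 (h i)) m m.isLt
      rw [hΦapply]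
      simpa using this
  have hsurj : Function.Surjective Φ := by
    intro t
    refine ⟨∑ i, (∑ m : Fin (nn i), PowerSeries.monomial (m : ℕ) (t i m)) • b' i, ?_⟩
    funext i m
    rw [hΦapply]
    have hrep : b'.repr (∑ i', (∑ m' : Fin (nn i'),
        PowerSeries.monomial (m' : ℕ) (t i' m')) • b' i') i
        = ∑ m' : Fin (nn i), PowerSeries.monomial (m' : ℕ) (t i m') := by
      rw [map_sum]
      rw [Finset.sum_apply']
      rw [Finset.sum_eq_single_of_mem i (Finset.mem_univ i)]
      · rw [map_smul, Module.Basis.repr_self, Finsupp.smul_apply, Finsupp.single_apply,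
          if_pos rfl, smul_eq_mul, mul_one]
      · intro i' _ hi'
        rw [map_smul, Module.Basis.repr_self, Finsupp.smul_apply, Finsupp.single_apply,
          if_neg hi', smul_eq_mul, mul_zero]
    rw [hrep, map_sum, Finset.sum_eq_single_of_mem m (Finset.mem_univ m)]
    · rw [PowerSeries.coeff_monomial, if_pos rfl]
    · intro m' _ hm'
      rw [PowerSeries.coeff_monomial, if_neg (by
        intro h
        exact hm' (Fin.ext (by exact_mod_cast h.symm)))]
  -- assemble the equivalence
  have hNker : N.restrictScalars k = LinearMap.ker Φ := by rw [hker, hNN']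
  set eqv : (TensorProduct k (PowerSeries k) V ⧸ N.restrictScalars k)
      ≃ₗ[k] (∀ i, Fin (nn i) → k) :=
    (Submodule.quotEquivOfEq _ _ hNker).trans (Φ.quotKerEquivOfSurjective hsurj) with heqv
  have hfd : FiniteDimensional k
      (TensorProduct k (PowerSeries k) V ⧸ N.restrictScalars k) :=
    Module.Finite.equiv eqv.symm
  refine ⟨hfd, ?_⟩
  -- compute the dimension
  have hq : Module.finrank k
      (TensorProduct k (PowerSeries k) V ⧸ N.restrictScalars k) = ∑ i, nn i := by
    rw [eqv.finrank_eq, Module.finrank_pi_fintype]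
    exact Finset.sum_congr rfl fun i _ => Module.finrank_fin_fun k
  set d : Fin e → ℕ := fun j => Module.finrank k (E j) with hd
  have hcard : ∀ j : Fin e, Fintype.card (Module.Free.ChooseBasisIndex k (E j)) = d j :=
    fun j => (Module.finrank_eq_card_chooseBasisIndex k (E j)).symm
  have hsumnn : ∑ i, nn i = ∑ j : Fin e, ((e - (j : ℕ)) % e) * d j := by
    rw [← Finset.univ_sigma_univ, Finset.sum_sigma]
    refine Finset.sum_congr rfl fun j _ => ?_
    calc ∑ m : Module.Free.ChooseBasisIndex k (E j), nn ⟨j, m⟩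
        = ∑ _m : Module.Free.ChooseBasisIndex k (E j), ((e - (j : ℕ)) % e) :=
          Finset.sum_congr rfl (fun m _ => rfl)
      _ = Fintype.card (Module.Free.ChooseBasisIndex k (E j)) * ((e - (j : ℕ)) % e) := by
          rw [Finset.sum_const, smul_eq_mul, Finset.card_univ]
      _ = ((e - (j : ℕ)) % e) * d j := by rw [hcard j, mul_comm]
  have hdualeq : ∀ j : Fin e, d j = d ⟨(e - (j : ℕ)) % e, Nat.mod_lt _ (by omega)⟩ := by
    intro j
    have hdvd1 : e ∣ (j : ℕ) + (e - (j : ℕ)) % e := by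
      rcases Nat.eq_zero_or_pos (j : ℕ) with h | h
      · simp [h, Nat.mod_self]
      · rw [Nat.mod_eq_of_lt (by have := j.isLt; omega)]
        have := j.isLt
        exact ⟨1, by omega⟩
    have hdvd2 : e ∣ (e - (j : ℕ)) % e + (j : ℕ) := by rwa [Nat.add_comm] at hdvd1
    exact le_antisymm
      (finrank_eigen_le he hζ B hsymm hnd g hge1 hgB _ _ hdvd1)
      (finrank_eigen_le he hζ B hsymm hnd g hge1 hgB _ _ hdvd2)
  have hsumd : ∑ j : Fin e, d j = Module.finrank k V := by
    rw [Module.finrank_eq_card_basis b, Fintype.card_sigma]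
    exact Finset.sum_congr rfl fun j _ => (hcard j).symm
  have hker0 : LinearMap.ker (g - LinearMap.id) = E ⟨0, he⟩ := by
    rw [hE]
    show LinearMap.ker (g - LinearMap.id) = Module.End.eigenspace g (ζ ^ (0 : ℕ))
    rw [pow_zero, Module.End.eigenspace_def, one_smul]
    rfl
  rw [hq, hsumnn, arith_aux he d hdualeq, hsumd, hker0]

end main
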